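/- The Bergman projection P, defined by P(f)(z) = ∫_Δ f(ζ)/(1 - conj(ζ)·z)^2 dm(ζ), is not bounded on L^1(Δ, dm): there is no constant C such that ∫_Δ |P(f)(z)| dm(z) ≤ C ∫_Δ |f(z)| dm(z) for all f ∈ L^1(Δ, dm). -/

import Mathlib

open MeasureTheory Metric
open scoped Real ENNReal NNReal

open Set

lemma circleAvg {f : ℂ → ℂ} {c : ℂ} {R : ℝ} (hR : 0 < R)
    (hf : DiffContOnCl ℂ f (ball c R)) :
    ∫ θ in (0:ℝ)..(2*π), f (circleMap c R θ) = (2*π : ℝ) • f c := by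
  have h := hf.circleIntegral_sub_inv_smul (mem_ball_self hR)
  rw [circleIntegral] at h
  simp only [deriv_circleMap, circleMap_sub_center, smul_eq_mul] at h
  have hne : ∀ θ : ℝ, circleMap 0 R θ ≠ 0 := fun θ => circleMap_ne_center hR.ne'
  have : ∀ θ : ℝ, circleMap 0 R θ * Complex.I * ((circleMap 0 R θ)⁻¹ * f (circleMap c R θ))
      = Complex.I * f (circleMap c R θ) := by
    intro θ; field_simp [hne θ]
  simp_rw [this, intervalIntegral.integral_const_mul] at h
  apply mul_left_cancel₀ Complex.I_ne_zero
  rw [h, Complex.real_smul]; push_cast; ring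

lemma ballAvg {g : ℂ → ℂ} {U : Set ℂ} (hU : IsOpen U) {c : ℂ} {R : ℝ} (hR : 0 < R)
    (hsub : closedBall c R ⊆ U) (hg : DifferentiableOn ℂ g U) :
    ∫ ζ in ball c R, g ζ = (π * R^2 : ℝ) • g c := by
  have hcont : ContinuousOn g U := hg.continuousOn
  set F : ℂ → ℂ := (ball c R).indicator g with hF
  have h1 : ∫ ζ in ball c R, g ζ = ∫ ζ, F ζ := (integral_indicator measurableSet_ball).symm
  have h2 : ∫ ζ, F ζ = ∫ ζ, F (c + ζ) := (integral_add_left_eq_self F c).symm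
  have h3 : (∫ p in polarCoord.target, p.1 • F (c + Complex.polarCoord.symm p))
      = ∫ ζ, F (c + ζ) := Complex.integral_comp_polarCoord_symm (fun ζ => F (c + ζ))
  have h4 : ∫ p in polarCoord.target, p.1 • F (c + Complex.polarCoord.symm p)
      = ∫ p in (Ioo (0:ℝ) R ×ˢ Ioo (-π) π),
          (p.1 : ℂ) * g (c + p.1 * Complex.exp (p.2 * Complex.I)) := by
    rw [setIntegral_congr_fun (by rw [polarCoord_target]; measurability)
        (g := (Ioo (0:ℝ) R ×ˢ Ioo (-π) π).indicator
        (fun p => (p.1 : ℂ) * g (c + p.1 * Complex.exp (p.2 * Complex.I))))]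
    · rw [setIntegral_indicator (by measurability)]
      congr 1
      rw [Set.inter_eq_self_of_subset_right]
      rw [polarCoord_target]
      exact Set.prod_mono (Ioo_subset_Ioi_self) le_rfl
    · rintro ⟨ρ, θ⟩ hp
      rw [polarCoord_target] at hp
      obtain ⟨hρ : ρ ∈ Ioi 0, hθ : θ ∈ Ioo (-π) π⟩ := hp
      have habs : ‖Complex.polarCoord.symm (ρ, θ)‖ = ρ := by
        rw [Complex.norm_polarCoord_symm]; exact abs_of_pos hρ
      have hsymm : (Complex.polarCoord.symm (ρ, θ) : ℂ)
          = ρ * Complex.exp (θ * Complex.I) := by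
        rw [Complex.polarCoord_symm_apply, Complex.exp_mul_I]
        push_cast; ring
      have hdist : dist (c + Complex.polarCoord.symm (ρ, θ)) c = ρ := by
        rw [dist_eq_norm, add_sub_cancel_left]
        exact habs
      by_cases hlt : ρ < R
      · have hmem : c + Complex.polarCoord.symm (ρ, θ) ∈ ball c R := by
          rw [mem_ball, hdist]; exact hlt
        have hmem2 : ((ρ,θ) : ℝ × ℝ) ∈ Ioo (0:ℝ) R ×ˢ Ioo (-π) π := ⟨⟨hρ, hlt⟩, hθ⟩
        show ρ • (ball c R).indicator g (c + Complex.polarCoord.symm (ρ, θ)) = _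
        rw [Set.indicator_of_mem hmem, Set.indicator_of_mem hmem2, hsymm,
          Complex.real_smul]
      · have hmem : c + Complex.polarCoord.symm (ρ, θ) ∉ ball c R := by
          rw [mem_ball, hdist]; exact hlt
        have hmem2 : ((ρ,θ) : ℝ × ℝ) ∉ Ioo (0:ℝ) R ×ˢ Ioo (-π) π := by
          rintro ⟨⟨_, h⟩, _⟩; exact hlt h
        show ρ • (ball c R).indicator g (c + Complex.polarCoord.symm (ρ, θ)) = _
        rw [Set.indicator_of_notMem hmem, Set.indicator_of_notMem hmem2, smul_zero]
  -- integrability on the rectangle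
  set φ : ℝ × ℝ → ℂ := fun p => (p.1 : ℂ) * g (c + p.1 * Complex.exp (p.2 * Complex.I)) with hφ
  have hmaps : MapsTo (fun p : ℝ × ℝ => c + p.1 * Complex.exp (p.2 * Complex.I))
      (Icc (0:ℝ) R ×ˢ Icc (-π) π) U := by
    rintro ⟨ρ, θ⟩ ⟨hρ, hθ⟩
    apply hsub
    rw [mem_closedBall, dist_eq_norm, add_sub_cancel_left]
    rw [norm_mul, Complex.norm_exp_ofReal_mul_I, mul_one, Complex.norm_real,
      Real.norm_eq_abs, abs_of_nonneg hρ.1]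
    exact hρ.2
  have hφcont : ContinuousOn φ (Icc (0:ℝ) R ×ˢ Icc (-π) π) := by
    apply ContinuousOn.mul
    · exact (Complex.continuous_ofReal.comp continuous_fst).continuousOn
    · apply hcont.comp _ hmaps
      fun_prop
  have hInt : IntegrableOn φ (Ioo (0:ℝ) R ×ˢ Ioo (-π) π) := by
    apply (hφcont.integrableOn_compact (isCompact_Icc.prod isCompact_Icc)).mono_set
    exact Set.prod_mono Ioo_subset_Icc_self Ioo_subset_Icc_self
  have h5 : ∫ p in (Ioo (0:ℝ) R ×ˢ Ioo (-π) π), φ p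
      = ∫ ρ in Ioo (0:ℝ) R, ∫ θ in Ioo (-π) π, φ (ρ, θ) := by
    rw [Measure.volume_eq_prod] at hInt ⊢
    exact setIntegral_prod φ hInt
  -- inner integral
  have hinner : ∀ ρ ∈ Ioo (0:ℝ) R,
      ∫ θ in Ioo (-π) π, φ (ρ, θ) = (ρ : ℂ) * ((2*π : ℝ) • g c) := by
    intro ρ hρ
    have : ∫ θ in Ioo (-π) π, φ (ρ, θ)
        = (ρ : ℂ) * ∫ θ in Ioo (-π) π, g (circleMap c ρ θ) := by
      rw [← MeasureTheory.integral_const_mul]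
      rfl
    rw [this]
    congr 1
    rw [← integral_Ioc_eq_integral_Ioo,
      ← intervalIntegral.integral_of_le (by linarith [Real.pi_pos] : (-π:ℝ) ≤ π)]
    have hper : Function.Periodic (fun θ => g (circleMap c ρ θ)) (2*π) :=
      (periodic_circleMap c ρ).comp g
    have hshift := hper.intervalIntegral_add_eq (-π) 0
    simp only [zero_add] at hshift
    have hpi : -π + 2*π = π := by ring
    rw [hpi] at hshift
    rw [hshift]
    apply circleAvg hρ.1
    constructor
    · exact hg.mono fun z hz => hsub (ball_subset_closedBall.trans
        (closedBall_subset_closedBall hρ.2.le) hz)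
    · exact hcont.mono fun z hz => hsub (closedBall_subset_closedBall hρ.2.le
        (closure_ball_subset_closedBall hz))
  have h6 : ∫ ρ in Ioo (0:ℝ) R, ∫ θ in Ioo (-π) π, φ (ρ, θ)
      = (∫ ρ in Ioo (0:ℝ) R, (ρ:ℂ)) * ((2*π : ℝ) • g c) := by
    rw [setIntegral_congr_fun measurableSet_Ioo hinner, ← integral_mul_const]
  have h7 : (∫ ρ in Ioo (0:ℝ) R, (ρ:ℂ)) = ((R^2/2 : ℝ) : ℂ) := by
    rw [show (∫ ρ in Ioo (0:ℝ) R, (ρ:ℂ)) = ((∫ ρ in Ioo (0:ℝ) R, ρ : ℝ) : ℂ) from integral_ofReal, ← integral_Ioc_eq_integral_Ioo,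
      ← intervalIntegral.integral_of_le hR.le]
    norm_num [integral_id]
  rw [h1, h2, ← h3, h4, h5, h6, h7]
  rw [Complex.real_smul, Complex.real_smul]
  push_cast
  ring

/-- Mean value of the Bergman kernel over a small disc (antiholomorphic in ζ). -/
lemma kernelMV {c z : ℂ} {ε : ℝ} (hε : 0 < ε) (hsub : closedBall c ε ⊆ ball (0:ℂ) 1)
    (hz : z ∈ ball (0:ℂ) 1) :
    ∫ ζ in ball c ε, 1 / ((1 : ℂ) - (starRingEnd ℂ) ζ * z) ^ 2
      = (π * ε^2 : ℝ) • (1 / ((1 : ℂ) - (starRingEnd ℂ) c * z) ^ 2) := by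
  set w := (starRingEnd ℂ) z with hw
  set U : Set ℂ := {ζ | 1 - ζ * w ≠ 0} with hU
  have hUopen : IsOpen U := isOpen_ne.preimage (by fun_prop)
  have hball : ball (0:ℂ) 1 ⊆ U := by
    intro ζ hζ
    simp only [hU, mem_setOf_eq, sub_ne_zero]
    intro h
    have : ‖ζ * w‖ < 1 := by
      rw [norm_mul]
      have h1 : ‖ζ‖ < 1 := by simpa [Complex.dist_eq] using hζ
      have h2 : ‖w‖ ≤ 1 := by
        rw [hw, Complex.norm_conj]
        exact le_of_lt (by simpa [Complex.dist_eq] using hz)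
      calc ‖ζ‖ * ‖w‖ ≤ ‖ζ‖ * 1 :=
            mul_le_mul_of_nonneg_left h2 (norm_nonneg _)
        _ < 1 := by simpa using h1
    rw [← h] at this
    simp at this
  have hgd : DifferentiableOn ℂ (fun ζ => 1 / (1 - ζ * w) ^ 2) U := by
    apply DifferentiableOn.div (differentiableOn_const _)
    · fun_prop
    · intro ζ hζ
      exact pow_ne_zero _ hζ
  have key := ballAvg hUopen hε (hsub.trans hball) hgd
  have hconj : ∀ ζ : ℂ, 1 / ((1 : ℂ) - (starRingEnd ℂ) ζ * z) ^ 2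
      = (starRingEnd ℂ) (1 / (1 - ζ * w) ^ 2) := by
    intro ζ
    rw [map_div₀, map_pow, map_sub, map_mul, map_one]
    simp [hw]
  simp_rw [hconj]
  rw [integral_conj, key, Complex.real_smul, Complex.real_smul, map_mul]
  simp

lemma kernelLB {r u : ℝ} {z : ℂ} (hu : 0 < u) (hr0 : 0 ≤ r) (hr1 : r < 1) (hru : 1 - r ≤ u)
    (hz : z ∈ ball (((1 - 2*u : ℝ)) : ℂ) u) (hz1 : ‖z‖ < 1) :
    ENNReal.ofReal (1/(16*u^2)) ≤ (‖1/((1:ℂ) - (r:ℝ) * z)^2‖₊ : ℝ≥0∞) := by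
  set a : ℂ := 1 - (r:ℝ) * z with ha
  have hane : a ≠ 0 := by
    rw [ha, sub_ne_zero]
    intro h
    have : ‖(1:ℂ)‖ < 1 := by
      rw [h, norm_mul, Complex.norm_real, Real.norm_eq_abs, abs_of_nonneg hr0]
      calc r * ‖z‖ ≤ 1 * ‖z‖ := by nlinarith [norm_nonneg z]
        _ < 1 := by simpa using hz1
    simp at this
  have hna : ‖a‖ ≤ 4 * u := by
    have h1 : ‖(1:ℂ) - z‖ ≤ 3 * u := by
      have hd1 : dist z (((1 - 2*u : ℝ)) : ℂ) < u := hz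
      have hd2 : dist ((((1 - 2*u : ℝ))) : ℂ) ((1:ℝ) : ℂ) = 2*u := by
        rw [dist_eq_norm]
        have : (((1 - 2*u : ℝ)) : ℂ) - ((1:ℝ):ℂ) = ((-(2*u) : ℝ) : ℂ) := by push_cast; ring
        rw [this, Complex.norm_real, Real.norm_eq_abs, abs_of_nonpos (by linarith)]
        ring
      have := dist_triangle z (((1 - 2*u : ℝ)) : ℂ) ((1:ℝ):ℂ)
      have : dist z ((1:ℝ):ℂ) ≤ 3 * u := by
        rw [hd2] at this
        linarith
      calc ‖(1:ℂ) - z‖ = dist z ((1:ℝ):ℂ) := by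
            rw [dist_eq_norm, ← norm_neg]
            push_cast
            ring_nf
        _ ≤ 3*u := this
    have h2 : ‖z - (r:ℝ)*z‖ ≤ u := by
      have : z - (r:ℝ)*z = ((1 - r : ℝ) : ℂ) * z := by push_cast; ring
      rw [this, norm_mul, Complex.norm_real, Real.norm_eq_abs, abs_of_nonneg (by linarith)]
      nlinarith [norm_nonneg z]
    calc ‖a‖ = ‖((1:ℂ) - z) + (z - (r:ℝ)*z)‖ := by rw [ha]; ring_nf
      _ ≤ ‖(1:ℂ) - z‖ + ‖z - (r:ℝ)*z‖ := norm_add_le _ _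
      _ ≤ 3*u + u := add_le_add h1 h2
      _ = 4*u := by ring
  have hval : ‖1/a^2‖ = (‖a‖^2)⁻¹ := by
    rw [norm_div, norm_one, norm_pow, one_div]
  have hbound : 1/(16*u^2) ≤ ‖1/a^2‖ := by
    rw [hval, one_div]
    apply inv_anti₀
    · exact pow_pos (norm_pos_iff.mpr hane) 2
    · nlinarith [norm_nonneg a]
  calc ENNReal.ofReal (1/(16*u^2)) ≤ ENNReal.ofReal ‖1/a^2‖ := ENNReal.ofReal_le_ofReal hbound
    _ = (‖1/a^2‖₊ : ℝ≥0∞) := ofReal_norm _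

/-- The Bergman projection `P(f)(z) = ∫_Δ f(ζ)/(1 - conj(ζ)z)² dm(ζ)` is not bounded on
`L¹(Δ, dm)` (`dm = dA/π`): there is no constant `C` with
`∫_Δ |P(f)| dm ≤ C ∫_Δ |f| dm` for all `f ∈ L¹(Δ, dm)`. -/
theorem bergman_projection_not_bounded_on_L1 :
    ¬ ∃ C : ℝ≥0, ∀ f : ℂ → ℂ, IntegrableOn f (ball (0 : ℂ) 1) →
      (∫⁻ z in ball (0 : ℂ) 1,
          (‖(π : ℂ)⁻¹ * ∫ ζ in ball (0 : ℂ) 1,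
              f ζ / (1 - (starRingEnd ℂ) ζ * z) ^ 2‖₊ : ℝ≥0∞)
          ∂((ENNReal.ofReal π)⁻¹ • volume)) ≤
        (C : ℝ≥0∞) *
          ∫⁻ z in ball (0 : ℂ) 1, (‖f z‖₊ : ℝ≥0∞) ∂((ENNReal.ofReal π)⁻¹ • volume) := by
  rintro ⟨C, hC⟩
  set N : ℕ := ⌈(16:ℝ≥0) * C⌉₊ + 1 with hN
  set t : ℕ → ℝ := fun j => (1/4:ℝ)^j with ht
  have ht_pos : ∀ j, 0 < t j := fun j => pow_pos (by norm_num) j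
  have ht_le1 : ∀ j, t j ≤ 1 := fun j => pow_le_one₀ (by norm_num) (by norm_num)
  have ht_anti : ∀ i j, i ≤ j → t j ≤ t i := fun i j hij =>
    pow_le_pow_of_le_one (by norm_num) (by norm_num) hij
  set ε : ℝ := t N / 2 with hε
  set r : ℝ := 1 - t N with hr
  have hεpos : 0 < ε := by positivity
  have hr0 : 0 ≤ r := by simp only [hr]; linarith [ht_le1 N]
  have hr1 : r < 1 := by simp only [hr]; linarith [ht_pos N]
  set c : ℂ := ((r : ℝ) : ℂ) with hc
  set f : ℂ → ℂ := (ball c ε).indicator (fun _ => (1:ℂ)) with hf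
  have hsub : closedBall c ε ⊆ ball (0:ℂ) 1 := by
    intro ζ hζ
    rw [mem_closedBall, dist_eq_norm] at hζ
    rw [mem_ball, dist_eq_norm, sub_zero]
    calc ‖ζ‖ ≤ ‖ζ - c‖ + ‖c‖ := by
          have := norm_add_le (ζ - c) c
          simpa using this
      _ ≤ ε + r := by
          have : ‖c‖ = r := by rw [hc, Complex.norm_real, Real.norm_eq_abs, abs_of_nonneg hr0]
          linarith [hζ, this.le]
      _ < 1 := by rw [hε, hr]; linarith [ht_pos N]
  have hfint : IntegrableOn f (ball (0:ℂ) 1) :=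
    (integrableOn_const measure_ball_lt_top.ne).indicator measurableSet_ball
  set K : ℂ → ℂ := fun z => 1 / ((1:ℂ) - (r:ℝ) * z)^2 with hK
  -- inner evaluation
  have hinner : ∀ z ∈ ball (0:ℂ) 1,
      (π : ℂ)⁻¹ * ∫ ζ in ball (0 : ℂ) 1, f ζ / (1 - (starRingEnd ℂ) ζ * z) ^ 2
        = ((ε^2 : ℝ) : ℂ) * K z := by
    intro z hz
    have h1 : ∀ ζ, f ζ / (1 - (starRingEnd ℂ) ζ * z)^2
        = (ball c ε).indicator (fun ζ => 1 / (1 - (starRingEnd ℂ) ζ * z)^2) ζ := by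
      intro ζ
      by_cases h : ζ ∈ ball c ε <;> simp [hf, h]
    simp_rw [h1]
    rw [setIntegral_indicator measurableSet_ball,
      Set.inter_eq_self_of_subset_right (ball_subset_closedBall.trans hsub),
      kernelMV hεpos hsub hz]
    have hcc : (starRingEnd ℂ) c = c := by rw [hc, Complex.conj_ofReal]
    rw [hcc, Complex.real_smul, hK]
    have hπ : (π : ℂ) ≠ 0 := by
      simp [Complex.ofReal_ne_zero, Real.pi_ne_zero]
    push_cast
    field_simp
    rw [hc]; ring
  have hCf := hC f hfint
  set I : ℝ≥0∞ := ∫⁻ z in ball (0:ℂ) 1, (‖K z‖₊ : ℝ≥0∞) ∂volume with hI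
  have hπeq : ENNReal.ofReal π = (NNReal.pi : ℝ≥0∞) := by
    rw [← NNReal.coe_real_pi, ENNReal.ofReal_coe_nnreal]
  have hπ0 : (NNReal.pi : ℝ≥0∞) ≠ 0 := by
    simp [NNReal.pi_ne_zero]
  have hπtop : (NNReal.pi : ℝ≥0∞) ≠ ⊤ := ENNReal.coe_ne_top
  -- LHS of hCf
  have hLHS : (∫⁻ z in ball (0 : ℂ) 1,
      (‖(π : ℂ)⁻¹ * ∫ ζ in ball (0 : ℂ) 1,
          f ζ / (1 - (starRingEnd ℂ) ζ * z) ^ 2‖₊ : ℝ≥0∞)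
      ∂((ENNReal.ofReal π)⁻¹ • volume))
      = ENNReal.ofReal (ε^2) * ((NNReal.pi : ℝ≥0∞)⁻¹ * I) := by
    rw [Measure.restrict_smul, lintegral_smul_measure, hπeq]
    rw [setLIntegral_congr_fun measurableSet_ball (fun z hz => ?_)
      (g := fun z => ENNReal.ofReal (ε^2) * (‖K z‖₊ : ℝ≥0∞))]
    · rw [lintegral_const_mul' _ _ ENNReal.ofReal_ne_top]
      ring
    · rw [hinner z hz, nnnorm_mul, ENNReal.coe_mul]
      congr 1
      rw [← enorm_eq_nnnorm, ← ofReal_norm, Complex.norm_real, Real.norm_eq_abs,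
        abs_of_nonneg (sq_nonneg ε)]
  -- RHS of hCf
  have hRHS : (∫⁻ z in ball (0 : ℂ) 1, (‖f z‖₊ : ℝ≥0∞) ∂((ENNReal.ofReal π)⁻¹ • volume))
      = ENNReal.ofReal (ε^2) * (NNReal.pi : ℝ≥0∞)⁻¹ * (NNReal.pi : ℝ≥0∞) := by
    have hfn : ∀ z : ℂ, (‖f z‖₊ : ℝ≥0∞) = (ball c ε).indicator (fun _ => (1:ℝ≥0∞)) z := by
      intro z; by_cases h : z ∈ ball c ε <;> simp [hf, h]
    rw [Measure.restrict_smul, lintegral_smul_measure, hπeq]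
    simp_rw [hfn]
    rw [lintegral_indicator measurableSet_ball, Measure.restrict_restrict measurableSet_ball,
      Set.inter_eq_self_of_subset_left (ball_subset_closedBall.trans hsub),
      lintegral_one, Measure.restrict_apply_univ, Complex.volume_ball,
      ← ENNReal.ofReal_pow hεpos.le]
    ring
  rw [hLHS, hRHS] at hCf
  -- cancel ε² and π
  have hε0 : ENNReal.ofReal (ε^2) ≠ 0 := by
    simp [ENNReal.ofReal_eq_zero, not_le]
    positivity
  have hεtop : ENNReal.ofReal (ε^2) ≠ ⊤ := ENNReal.ofReal_ne_top
  have step1 : (NNReal.pi : ℝ≥0∞)⁻¹ * I ≤ (C : ℝ≥0∞) := by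
    have h2 : ENNReal.ofReal (ε^2) * ((NNReal.pi : ℝ≥0∞)⁻¹ * I)
        ≤ ENNReal.ofReal (ε^2) * (C : ℝ≥0∞) := by
      calc ENNReal.ofReal (ε^2) * ((NNReal.pi : ℝ≥0∞)⁻¹ * I)
          ≤ (C : ℝ≥0∞) * (ENNReal.ofReal (ε^2) * (NNReal.pi : ℝ≥0∞)⁻¹ * (NNReal.pi : ℝ≥0∞)) := hCf
        _ = ENNReal.ofReal (ε^2) * ((C : ℝ≥0∞) * ((NNReal.pi : ℝ≥0∞)⁻¹ * (NNReal.pi : ℝ≥0∞))) := by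
            ring
        _ = ENNReal.ofReal (ε^2) * (C : ℝ≥0∞) := by
            rw [ENNReal.inv_mul_cancel hπ0 hπtop, mul_one]
    exact (ENNReal.mul_le_mul_iff_right hε0 hεtop).mp h2
  have hIle : I ≤ (NNReal.pi : ℝ≥0∞) * (C : ℝ≥0∞) := by
    have := mul_le_mul_right step1 (NNReal.pi : ℝ≥0∞)
    rwa [← mul_assoc, ENNReal.mul_inv_cancel hπ0 hπtop, one_mul] at this
  -- lower bound on I
  set s : Fin N → Set ℂ := fun i => ball ((((1 - 2 * t (i.1+1) : ℝ))) : ℂ) (t (i.1+1)) with hs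
  have hmeas : ∀ i, MeasurableSet (s i) := fun i => measurableSet_ball
  have husub : ∀ i, s i ⊆ ball (0:ℂ) 1 := by
    intro i z hz
    set u := t (i.1+1) with hu
    have hu14 : u ≤ 1/4 := by
      calc u ≤ t 1 := ht_anti 1 _ (by omega)
        _ = 1/4 := by simp [ht]
    rw [mem_ball, dist_eq_norm, sub_zero]
    have h1 : ‖z - (((1 - 2*u : ℝ)) : ℂ)‖ < u := by
      rw [← dist_eq_norm]; exact hz
    have h2 : ‖(((1 - 2*u : ℝ)) : ℂ)‖ = 1 - 2*u := by
      rw [Complex.norm_real, Real.norm_eq_abs, abs_of_nonneg (by linarith)]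
    calc ‖z‖ ≤ ‖z - (((1 - 2*u : ℝ)) : ℂ)‖ + ‖(((1 - 2*u : ℝ)) : ℂ)‖ := by
          have := norm_add_le (z - (((1 - 2*u : ℝ)) : ℂ)) (((1 - 2*u : ℝ)) : ℂ)
          simpa using this
      _ < u + (1 - 2*u) := by rw [h2]; linarith
      _ < 1 := by linarith [ht_pos (i.1+1)]
  have hdisj : Pairwise (Function.onFun Disjoint s) := by
    rw [pairwise_disjoint_on]
    intro i j hij
    apply ball_disjoint_ball
    have hij1 : i.1 + 2 ≤ j.1 + 1 := by omega
    have h1 : t (j.1+1) ≤ t (i.1+2) := ht_anti _ _ hij1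
    have h2 : t (i.1+2) = t (i.1+1) / 4 := by
      simp only [ht, pow_succ]
      ring
    have hd : dist ((((1 - 2 * t (i.1+1) : ℝ))) : ℂ) ((((1 - 2 * t (j.1+1) : ℝ))) : ℂ)
        = 2 * t (i.1+1) - 2 * t (j.1+1) := by
      rw [dist_eq_norm]
      have : ((((1 - 2 * t (i.1+1) : ℝ))) : ℂ) - ((((1 - 2 * t (j.1+1) : ℝ))) : ℂ)
          = (((2 * t (j.1+1) - 2 * t (i.1+1) : ℝ)) : ℂ) := by push_cast; ring
      rw [this, Complex.norm_real, Real.norm_eq_abs, abs_of_nonpos ?_]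
      · ring
      · have := ht_anti (i.1+1) (j.1+1) (by omega)
        linarith
    rw [hd]
    have := ht_pos (j.1+1)
    linarith
  have hlow : ∀ i, ENNReal.ofReal (1/16) * (NNReal.pi : ℝ≥0∞)
      ≤ ∫⁻ z in s i, (‖K z‖₊ : ℝ≥0∞) ∂volume := by
    intro i
    set u := t (i.1+1) with hu
    have hupos := ht_pos (i.1+1)
    have hru : 1 - r ≤ u := by
      rw [hr]
      simpa using ht_anti (i.1+1) N (by omega)
    calc ENNReal.ofReal (1/16) * (NNReal.pi : ℝ≥0∞)
        = ENNReal.ofReal (1/(16*u^2)) * volume (s i) := by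
          rw [hs, Complex.volume_ball, ← ENNReal.ofReal_pow hupos.le, ← mul_assoc,
            ← ENNReal.ofReal_mul (by positivity)]
          congr 2
          field_simp
          rw [← hu, div_self (pow_ne_zero 2 hupos.ne')]
      _ = ∫⁻ _ in s i, ENNReal.ofReal (1/(16*u^2)) ∂volume := by
          rw [setLIntegral_const]
      _ ≤ ∫⁻ z in s i, (‖K z‖₊ : ℝ≥0∞) ∂volume := by
          apply setLIntegral_mono' (hmeas i)
          intro z hz
          have hz1 : ‖z‖ < 1 := by
            have := husub i hz
            rwa [mem_ball, dist_eq_norm, sub_zero] at this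
          exact kernelLB hupos hr0 hr1 hru hz hz1
  have hItotal : (N : ℝ≥0∞) * (ENNReal.ofReal (1/16) * (NNReal.pi : ℝ≥0∞)) ≤ I := by
    calc (N : ℝ≥0∞) * (ENNReal.ofReal (1/16) * (NNReal.pi : ℝ≥0∞))
        = ∑ i : Fin N, ENNReal.ofReal (1/16) * (NNReal.pi : ℝ≥0∞) := by
          rw [Finset.sum_const, Finset.card_univ, Fintype.card_fin, nsmul_eq_mul]
      _ ≤ ∑ i : Fin N, ∫⁻ z in s i, (‖K z‖₊ : ℝ≥0∞) ∂volume :=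
          Finset.sum_le_sum fun i _ => hlow i
      _ = ∑' i : Fin N, ∫⁻ z in s i, (‖K z‖₊ : ℝ≥0∞) ∂volume := (tsum_fintype _).symm
      _ = ∫⁻ z in ⋃ i, s i, (‖K z‖₊ : ℝ≥0∞) ∂volume :=
          (lintegral_iUnion hmeas hdisj _).symm
      _ ≤ I := lintegral_mono_set (Set.iUnion_subset husub)
  -- combine
  have h16 : ENNReal.ofReal (1/16) = (16 : ℝ≥0∞)⁻¹ := by
    rw [one_div, ENNReal.ofReal_inv_of_pos (by norm_num)]
    norm_num
  have hfinal : (N : ℝ≥0∞) * (16 : ℝ≥0∞)⁻¹ ≤ (C : ℝ≥0∞) := by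
    have h := hItotal.trans hIle
    rw [h16] at h
    have h2 : (NNReal.pi : ℝ≥0∞) * ((N : ℝ≥0∞) * (16 : ℝ≥0∞)⁻¹)
        ≤ (NNReal.pi : ℝ≥0∞) * (C : ℝ≥0∞) := by
      calc (NNReal.pi : ℝ≥0∞) * ((N : ℝ≥0∞) * (16 : ℝ≥0∞)⁻¹)
          = (N : ℝ≥0∞) * ((16 : ℝ≥0∞)⁻¹ * (NNReal.pi : ℝ≥0∞)) := by ring
        _ ≤ (NNReal.pi : ℝ≥0∞) * (C : ℝ≥0∞) := h
    exact (ENNReal.mul_le_mul_iff_right hπ0 hπtop).mp h2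
  have hN16 : (N : ℝ≥0∞) ≤ (C : ℝ≥0∞) * 16 := by
    have := mul_le_mul_left hfinal (16 : ℝ≥0∞)
    rwa [mul_assoc, ENNReal.inv_mul_cancel (by norm_num) (by norm_num), mul_one] at this
  have hNN : (N : ℝ≥0) ≤ C * 16 := by
    have h : ((N : ℝ≥0) : ℝ≥0∞) ≤ ((C * 16 : ℝ≥0) : ℝ≥0∞) := by
      rw [ENNReal.coe_mul]
      rw [show ((N : ℝ≥0) : ℝ≥0∞) = (N : ℝ≥0∞) by simp]
      simpa using hN16
    exact_mod_cast h
  have hceil : (16 * C : ℝ≥0) ≤ (⌈(16:ℝ≥0) * C⌉₊ : ℝ≥0) := Nat.le_ceil _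
  have hNgt : (⌈(16:ℝ≥0) * C⌉₊ : ℝ≥0) < (N : ℝ≥0) := by
    rw [hN]
    exact_mod_cast Nat.lt_succ_self _
  have : (N : ℝ≥0) < (N : ℝ≥0) := by
    calc (N : ℝ≥0) ≤ C * 16 := hNN
      _ = 16 * C := mul_comm _ _
      _ ≤ (⌈(16:ℝ≥0) * C⌉₊ : ℝ≥0) := hceil
      _ < (N : ℝ≥0) := hNgt
  exact absurd this (lt_irrefl _)
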